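/- (Pyartli–Rüssmann measure estimate.) Let a < b be real numbers, let q ≥ 1 be an integer and β > 0. Let f : [a,b] → ℝ be q times continuously differentiable with |f^{(q)}(t)| > β for all t ∈ [a,b]. Then for every ρ > 0 the Lebesgue measure of the set {t ∈ [a,b] : |f(t)| ≤ ρ} is at most 4·(q!·ρ/(2β))^{1/q}. -/

import Mathlib

/-!  Pyartli–Rüssmann measure estimate. -/

open Polynomial Polynomial.Chebyshev in
lemma cheb_aux : ∀ n : ℕ, (T ℝ n).natDegree ≤ n ∧ (T ℝ n).coeff n = if n = 0 then 1 else 2^(n-1) := by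
  intro n
  induction n using Nat.strong_induction_on with
  | _ n ih =>
    match n with
    | 0 => simp
    | 1 => simp
    | (m+2) =>
      have h1 := ih (m+1) (by omega)
      have h2 := ih m (by omega)
      have hT : T ℝ (m+2 : ℕ) = 2 * X * T ℝ (m+1 : ℕ) - T ℝ (m : ℕ) := by
        have := T_add_two ℝ (m : ℤ)
        push_cast
        push_cast at this
        convert this using 2 <;> push_cast <;> ring
      constructor
      · rw [hT]
        refine le_trans (natDegree_sub_le _ _) ?_
        simp only [max_le_iff]
        constructor
        · calc (2 * X * T ℝ (m+1:ℕ)).natDegree ≤ (2*X : ℝ[X]).natDegree + (T ℝ (m+1:ℕ)).natDegree :=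
                natDegree_mul_le
            _ ≤ 1 + (m+1) := by
                gcongr
                · exact (natDegree_C_mul_le 2 X).trans (by simp)
                · exact h1.1
            _ ≤ m + 2 := by omega
        · omega
      · rw [hT]
        have e1 : (2 * X * T ℝ (m+1:ℕ)).coeff (m+2) = 2 * (T ℝ (m+1:ℕ)).coeff (m+1) := by
          rw [mul_assoc, show ((2:ℝ[X]) = Polynomial.C 2) from (map_ofNat Polynomial.C 2).symm, coeff_C_mul, coeff_X_mul]
        have e2 : (T ℝ (m:ℕ)).coeff (m+2) = 0 := by
          apply coeff_eq_zero_of_natDegree_lt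
          omega
        rw [coeff_sub, e1, e2, h1.2]
        simp only [Nat.add_sub_cancel, if_neg (Nat.succ_ne_zero m), if_neg (by omega : ¬ m+2 = 0)]
        rw [sub_zero, ← pow_succ']
        norm_num


open Set in
lemma iter_rolle (a b : ℝ) (hab : a < b) :
    ∀ (k : ℕ) (g : ℝ → ℝ), ContDiffOn ℝ k g (Set.Icc a b) →
    ∀ (u : Fin (k+1) → ℝ), StrictMono u → (∀ i, u i ∈ Set.Icc a b) → (∀ i, g (u i) = 0) →
    ∃ ξ ∈ Set.Icc a b, iteratedDerivWithin k g (Set.Icc a b) ξ = 0 := by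
  intro k
  induction k with
  | zero =>
    intro g hg u hu hmem hz
    exact ⟨u 0, hmem 0, by simpa using hz 0⟩
  | succ k IH =>
    intro g hg u hu hmem hz
    have hUD : UniqueDiffOn ℝ (Icc a b) := uniqueDiffOn_Icc hab
    have hdiff : DifferentiableOn ℝ g (Icc a b) :=
      hg.differentiableOn (by simp)
    -- construct the Rolle points
    have key : ∀ i : Fin (k+1), ∃ c ∈ Ioo (u i.castSucc) (u i.succ),
        derivWithin g (Icc a b) c = 0 := by
      intro i
      have hlt : u i.castSucc < u i.succ := hu Fin.castSucc_lt_succ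
      have hsub : Icc (u i.castSucc) (u i.succ) ⊆ Icc a b :=
        Icc_subset_Icc (hmem _).1 (hmem _).2
      obtain ⟨c, hc, hc0⟩ := exists_deriv_eq_zero hlt
        ((hg.continuousOn).mono hsub) ((hz _).trans (hz _).symm)
      refine ⟨c, hc, ?_⟩
      have hcio : Icc a b ∈ nhds c := by
        apply Icc_mem_nhds
        · exact lt_of_le_of_lt (hmem i.castSucc).1 hc.1
        · exact lt_of_lt_of_le hc.2 (hmem i.succ).2
      rw [derivWithin_of_mem_nhds hcio, hc0]
    choose c hc hc0 using key
    have hcmem : ∀ i, c i ∈ Icc a b := fun i =>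
      ⟨le_trans (hmem i.castSucc).1 (hc i).1.le, le_trans (hc i).2.le (hmem i.succ).2⟩
    have hcmono : StrictMono c := by
      intro i j hij
      calc c i < u i.succ := (hc i).2
        _ ≤ u j.castSucc := hu.monotone (by
            rw [Fin.le_def]
            simp only [Fin.val_succ, Fin.coe_castSucc]
            exact hij)
        _ < c j := (hc j).1
    have hg' : ContDiffOn ℝ k (derivWithin g (Icc a b)) (Icc a b) :=
      hg.derivWithin hUD (by exact_mod_cast le_refl (k+1))
    obtain ⟨ξ, hξ, hξ0⟩ := IH (derivWithin g (Icc a b)) hg' c hcmono hcmem hc0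
    refine ⟨ξ, hξ, ?_⟩
    rw [iteratedDerivWithin_succ']
    exact hξ0


section
open Set Polynomial
lemma poly_idw (p : Polynomial ℝ) {s : Set ℝ} (hs : UniqueDiffOn ℝ s) (n : ℕ) :
    ∀ x ∈ s, iteratedDerivWithin n (fun y => p.eval y) s x
      = (Polynomial.derivative^[n] p).eval x := by
  induction n with
  | zero => intro x hx; simp
  | succ n IH =>
    intro x hx
    rw [iteratedDerivWithin_succ]
    rw [derivWithin_congr IH (IH x hx)]
    rw [DifferentiableAt.derivWithin (by exact (Polynomial.differentiable _).differentiableAt)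
      (hs x hx)]
    rw [Polynomial.deriv, Function.iterate_succ_apply']

lemma interp_coeff {F : Type*} [Field F] {n : ℕ} (v : Fin (n+1) → F) (hv : Function.Injective v)
    (r : Fin (n+1) → F) :
    (Lagrange.interpolate Finset.univ v r).coeff n
      = ∑ j, r j * ∏ i ∈ Finset.univ.erase j, (v j - v i)⁻¹ := by
  rw [Lagrange.interpolate_eq_nodalWeight_mul_nodal_div_X_sub_C, Polynomial.finset_sum_coeff]
  refine Finset.sum_congr rfl ?_
  intro j _
  rw [← Lagrange.nodal_erase_eq_nodal_div (Finset.mem_univ j)]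
  have hdeg : (Lagrange.nodal (Finset.univ.erase j) v).natDegree = n := by
    rw [Lagrange.natDegree_nodal, Finset.card_erase_of_mem (Finset.mem_univ j)]
    simp
  have h1 : (Lagrange.nodal (Finset.univ.erase j) v).coeff n = 1 := by
    have := (Lagrange.nodal_monic (s := Finset.univ.erase j) (v := v)).coeff_natDegree
    rwa [hdeg] at this
  rw [Polynomial.coeff_mul_C, Polynomial.coeff_C_mul, h1, Lagrange.nodalWeight]
  ring
end


section
open Set Polynomial
lemma poly_contdiffon (p : Polynomial ℝ) (n : ℕ∞) (s : Set ℝ) :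
    ContDiffOn ℝ n (fun x : ℝ => p.eval x) s := by
  apply ContDiff.contDiffOn
  induction p using Polynomial.induction_on' with
  | add p q hp hq => simpa using hp.add hq
  | monomial k c => simpa [Polynomial.eval_monomial] using
      (contDiff_const (c := c)).mul (contDiff_id.pow k)

lemma divdiff_mvt (a b : ℝ) (hab : a < b) (n : ℕ) (f : ℝ → ℝ)
    (hf : ContDiffOn ℝ n f (Set.Icc a b)) (t : Fin (n+1) → ℝ) (ht : StrictMono t)
    (hmem : ∀ i, t i ∈ Set.Icc a b) :
    ∃ ξ ∈ Set.Icc a b, iteratedDerivWithin n f (Set.Icc a b) ξ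
      = (n.factorial : ℝ) * ∑ j, f (t j) * ∏ i ∈ Finset.univ.erase j, (t j - t i)⁻¹ := by
  classical
  have hUD : UniqueDiffOn ℝ (Icc a b) := uniqueDiffOn_Icc hab
  set P : Polynomial ℝ := Lagrange.interpolate Finset.univ t (fun j => f (t j)) with hP
  have hinj : Function.Injective t := ht.injective
  have hzero : ∀ i, (fun x => f x - P.eval x) (t i) = 0 := by
    intro i
    simp only [hP]
    rw [Lagrange.eval_interpolate_at_node _ (hinj.injOn) (Finset.mem_univ i)]
    ring
  have hg : ContDiffOn ℝ n (fun x => f x - P.eval x) (Set.Icc a b) :=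
    hf.sub (poly_contdiffon P n _)
  obtain ⟨ξ, hξ, hξ0⟩ := iter_rolle a b hab n _ hg t ht hmem hzero
  refine ⟨ξ, hξ, ?_⟩
  have hsub : iteratedDerivWithin n (fun x => f x - P.eval x) (Icc a b) ξ
      = iteratedDerivWithin n f (Icc a b) ξ - iteratedDerivWithin n (fun x => P.eval x) (Icc a b) ξ :=
    iteratedDerivWithin_sub hξ hUD (hf ξ hξ) (poly_contdiffon P n _ ξ hξ)
  have hPn : iteratedDerivWithin n (fun x => P.eval x) (Icc a b) ξ
      = (n.factorial : ℝ) * P.coeff n := by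
    rw [poly_idw P hUD n ξ hξ]
    have hdeg : (Polynomial.derivative^[n] P).natDegree = 0 := by
      have h1 : P.natDegree ≤ n := by
        have := Lagrange.degree_interpolate_lt (s := Finset.univ) (v := t) (hinj.injOn) (r := fun j => f (t j))
        simp only [Finset.card_univ, Fintype.card_fin] at this
        by_cases hP0 : P = 0
        · simp [hP0]
        · have h2 := (Polynomial.natDegree_lt_iff_degree_lt hP0).mpr
            (by exact_mod_cast this)
          omega
      have := Polynomial.natDegree_iterate_derivative P n
      omega
    rw [Polynomial.eq_C_of_natDegree_le_zero hdeg.le, Polynomial.eval_C,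
      Polynomial.coeff_iterate_derivative]
    simp [Nat.descFactorial_self, mul_comm]
  have hcoeff : P.coeff n = ∑ j, f (t j) * ∏ i ∈ Finset.univ.erase j, (t j - t i)⁻¹ :=
    interp_coeff t hinj _
  have : iteratedDerivWithin n f (Icc a b) ξ
      = iteratedDerivWithin n (fun x => P.eval x) (Icc a b) ξ := by
    rw [← sub_eq_zero, ← hsub, hξ0]
  rw [this, hPn, hcoeff]
end


open Polynomial Polynomial.Chebyshev Real Finset in
lemma cheb_nodes (q : ℕ) (hq : 1 ≤ q) :
    ∃ s : Fin (q+1) → ℝ, StrictMono s ∧ (∀ j, s j ∈ Set.Icc (0:ℝ) 1) ∧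
      ∑ j, (∏ i ∈ Finset.univ.erase j, |s j - s i|)⁻¹ = 2^(2*q-1) := by
  classical
  have hq0 : (q:ℝ) ≠ 0 := Nat.cast_ne_zero.mpr (by omega)
  have hqpos : (0:ℝ) < q := by positivity
  set y : Fin (q+1) → ℝ := fun j => -Real.cos (j * π / q) with hy
  have harg : ∀ j : Fin (q+1), (j:ℝ) * π / q ∈ Set.Icc 0 π := by
    intro j
    constructor
    · positivity
    · rw [div_le_iff₀ hqpos]
      have : (j:ℝ) ≤ q := by exact_mod_cast Nat.lt_succ_iff.mp j.isLt
      nlinarith [pi_pos]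
  have hymono : StrictMono y := by
    intro i j hij
    simp only [hy, neg_lt_neg_iff]
    apply Real.strictAntiOn_cos (harg i) (harg j)
    have hij' : (i:ℝ) < j := by exact_mod_cast hij
    gcongr
  have hymem : ∀ j, y j ∈ Set.Icc (-1:ℝ) 1 := by
    intro j
    constructor
    · simp only [hy, neg_le_neg_iff]; exact Real.cos_le_one _
    · simp only [hy]
      have := Real.neg_one_le_cos ((j:ℝ) * π / q)
      linarith
  have hyinj : Function.Injective y := hymono.injective
  -- evaluation of T at nodes
  have heval : ∀ j : Fin (q+1), (T ℝ q).eval (y j) = (-1:ℝ)^(q - j.val) := by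
    intro j
    have h1 : y j = Real.cos (π - (j:ℝ) * π / q) := by
      simp [hy, Real.cos_pi_sub]
    rw [h1, T_real_cos]
    have h2 : ((q:ℤ):ℝ) * (π - (j:ℝ) * π / q) = ((q - j.val : ℕ) : ℤ) * π := by
      have hj : (j.val : ℝ) ≤ q := by exact_mod_cast Nat.lt_succ_iff.mp j.isLt
      push_cast [Nat.cast_sub (Nat.lt_succ_iff.mp j.isLt)]
      field_simp
    rw [h2]
    push_cast
    simpa using Real.cos_nat_mul_pi_sub 0 (q - j.val)
  clear_value y
  -- sign of the products
  have hprod : ∀ j : Fin (q+1), ∏ i ∈ univ.erase j, (y j - y i)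
      = (-1:ℝ)^(q - j.val) * ∏ i ∈ univ.erase j, |y j - y i| := by
    intro j
    have hfac : ∀ i ∈ univ.erase j, y j - y i = (if j < i then (-1:ℝ) else 1) * |y j - y i| := by
      intro i hi
      rcases lt_or_gt_of_ne (Finset.ne_of_mem_erase hi) with h | h
      · rw [if_neg (not_lt.mpr h.le), one_mul, abs_of_pos (sub_pos.mpr (hymono h))]
      · rw [if_pos h, abs_of_neg (sub_neg.mpr (hymono h)), neg_one_mul, neg_neg]
    rw [Finset.prod_congr rfl hfac, Finset.prod_mul_distrib]
    congr 1
    rw [Finset.prod_ite, Finset.prod_const, Finset.prod_const, one_pow, mul_one]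
    congr 1
    have hset : (univ.erase j).filter (fun i => j < i) = Finset.Ioi j := by
      ext i
      simp only [Finset.mem_filter, Finset.mem_erase, Finset.mem_univ, Finset.mem_Ioi,
        and_true, true_and]
      exact ⟨fun h => h.2, fun h => ⟨h.ne', h⟩⟩
    rw [hset, Fin.card_Ioi]
    omega
  -- interpolation identity
  have hdeg : (T ℝ q).degree < (#(univ : Finset (Fin (q+1))) : WithBot ℕ) := by
    refine lt_of_le_of_lt Polynomial.degree_le_natDegree ?_
    rw [Finset.card_univ, Fintype.card_fin]
    exact_mod_cast Nat.lt_succ_of_le (cheb_aux q).1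
  have hT : (T ℝ q) = Lagrange.interpolate univ y (fun j => (T ℝ q).eval (y j)) :=
    Lagrange.eq_interpolate hyinj.injOn hdeg
  have hco : ((T ℝ q)).coeff q
      = ∑ j, (T ℝ q).eval (y j) * ∏ i ∈ univ.erase j, (y j - y i)⁻¹ := by
    conv_lhs => rw [hT]
    exact interp_coeff y hyinj _
  have hterm : ∀ j : Fin (q+1), (T ℝ q).eval (y j) * ∏ i ∈ univ.erase j, (y j - y i)⁻¹
      = (∏ i ∈ univ.erase j, |y j - y i|)⁻¹ := by
    intro j
    have hinv : ((-1:ℝ)^(q - j.val))⁻¹ = (-1:ℝ)^(q - j.val) := by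
      rw [← inv_pow]; norm_num
    rw [heval, Finset.prod_inv_distrib, hprod j, mul_inv, hinv, ← mul_assoc, ← pow_add]
    rw [Even.neg_one_pow ⟨q - j.val, by ring⟩, one_mul]
  have hsumy : ∑ j, (∏ i ∈ univ.erase j, |y j - y i|)⁻¹ = 2^(q-1) := by
    rw [← Finset.sum_congr rfl (fun j _ => hterm j), ← hco, (cheb_aux q).2, if_neg (by omega)]
  -- rescale to [0,1]
  refine ⟨fun j => (y j + 1)/2, ?_, ?_, ?_⟩
  · intro i j hij
    show (y i + 1)/2 < (y j + 1)/2
    have := hymono hij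
    linarith
  · intro j
    have h1 := (hymem j).1
    have h2 := (hymem j).2
    exact ⟨by show (0:ℝ) ≤ (y j + 1)/2; linarith, by show (y j + 1)/2 ≤ (1:ℝ); linarith⟩
  · show ∑ j : Fin (q+1), (∏ i ∈ univ.erase j, |(y j + 1)/2 - (y i + 1)/2|)⁻¹ = (2:ℝ)^(2*q-1)
    have hcard : ∀ j : Fin (q+1), (univ.erase j).card = q := by
      intro j
      rw [Finset.card_erase_of_mem (Finset.mem_univ j), Finset.card_univ, Fintype.card_fin]
      omega
    have hps : ∀ j : Fin (q+1), ∏ i ∈ univ.erase j, |(y j + 1)/2 - (y i + 1)/2|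
        = (∏ i ∈ univ.erase j, |y j - y i|) / 2^q := by
      intro j
      rw [show ((∏ i ∈ univ.erase j, |y j - y i|) / 2^q
          = ∏ i ∈ univ.erase j, (|y j - y i| / 2)) from ?_]
      · apply Finset.prod_congr rfl
        intro i _
        rw [show (y j + 1)/2 - (y i + 1)/2 = (y j - y i)/2 by ring, abs_div]
        norm_num
      · rw [Finset.prod_div_distrib, Finset.prod_const, hcard j]
    have : ∑ j, (∏ i ∈ univ.erase j, |(y j + 1)/2 - (y i + 1)/2|)⁻¹
        = ∑ j, 2^q * (∏ i ∈ univ.erase j, |y j - y i|)⁻¹ := by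
      apply Finset.sum_congr rfl
      intro j _
      rw [hps j, div_eq_mul_inv, mul_inv, inv_inv, mul_comm]
    rw [this, ← Finset.mul_sum, hsumy, ← pow_add]
    congr 1
    omega


open Set MeasureTheory in
lemma quantile (a b : ℝ) (E : Set ℝ) (hcl : IsClosed E) (hsub : E ⊆ Set.Icc a b) :
    ∃ τ : ℝ → ℝ,
      (∀ c, 0 < c → c ≤ (volume E).toReal → τ c ∈ E) ∧
      (∀ c c', 0 < c → c ≤ c' → c' ≤ (volume E).toReal → c' - c ≤ τ c' - τ c) := by
  classical
  have hfin : volume E ≠ ⊤ :=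
    ((measure_mono hsub).trans_lt measure_Icc_lt_top).ne
  have hfinI : ∀ t, volume (E ∩ Iic t) ≠ ⊤ :=
    fun t => ((measure_mono Set.inter_subset_left).trans_lt hfin.lt_top).ne
  set M := (volume E).toReal with hM
  set F : ℝ → ℝ := fun t => (volume (E ∩ Iic t)).toReal with hF
  have hFmono : Monotone F := by
    intro s t hst
    exact ENNReal.toReal_mono (hfinI t)
      (measure_mono (Set.inter_subset_inter_right _ (Iic_subset_Iic.mpr hst)))
  have hFlip : ∀ s t : ℝ, s ≤ t → F t ≤ F s + (t - s) := by
    intro s t hst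
    have hsubset : E ∩ Iic t ⊆ (E ∩ Iic s) ∪ Ioc s t := by
      rintro x ⟨hxE, hxt⟩
      rcases le_or_gt x s with h | h
      · exact Or.inl ⟨hxE, h⟩
      · exact Or.inr ⟨h, hxt⟩
    have h1 : volume (E ∩ Iic t) ≤ volume (E ∩ Iic s) + volume (Ioc s t) :=
      (measure_mono hsubset).trans (measure_union_le _ _)
    have h2 := ENNReal.toReal_mono (by
        refine ENNReal.add_ne_top.mpr ⟨hfinI s, ?_⟩
        simp [Real.volume_Ioc]) h1
    rw [ENNReal.toReal_add (hfinI s) (by simp [Real.volume_Ioc]), Real.volume_Ioc,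
      ENNReal.toReal_ofReal (by linarith)] at h2
    exact h2
  have hFcont : Continuous F := by
    refine LipschitzWith.continuous (K := 1) ?_
    refine LipschitzWith.of_dist_le_mul ?_
    intro s t
    rw [Real.dist_eq, Real.dist_eq]
    simp only [NNReal.coe_one, one_mul]
    rcases le_total s t with h | h
    · have := hFlip s t h
      have h2 := hFmono h
      rw [abs_sub_comm, abs_of_nonneg (by linarith), abs_of_nonpos (by linarith)]
      linarith
    · have := hFlip t s h
      have h2 := hFmono h
      rw [abs_of_nonneg (by linarith), abs_of_nonneg (by linarith)]
      linarith
  have hFlt : ∀ t, t < a → F t = 0 := by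
    intro t ht
    have : E ∩ Iic t = ∅ := by
      ext x
      simp only [Set.mem_inter_iff, Set.mem_Iic, Set.mem_empty_iff_false, iff_false, not_and]
      intro hx
      have := (hsub hx).1
      linarith
    simp [hF, this]
  have hFb : F b = M := by
    have : E ∩ Iic b = E := Set.inter_eq_left.mpr (fun x hx => (hsub hx).2)
    simp [hF, hM, this]
  set S : ℝ → Set ℝ := fun c => {t | c ≤ F t} with hS
  have hSclosed : ∀ c, IsClosed (S c) := fun c => isClosed_le continuous_const hFcont
  have hSne : ∀ c, c ≤ M → (S c).Nonempty := fun c hc => ⟨b, by simpa [hS, hFb] using hc⟩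
  have hSbdd : ∀ c, 0 < c → BddBelow (S c) := by
    intro c hc
    refine ⟨a, fun t ht => ?_⟩
    by_contra h
    push_neg at h
    have := hFlt t h
    simp only [hS, Set.mem_setOf_eq] at ht
    linarith
  set τ : ℝ → ℝ := fun c => sInf (S c) with hτ
  have hmemS : ∀ c, 0 < c → c ≤ M → τ c ∈ S c := fun c h1 h2 =>
    (hSclosed c).csInf_mem (hSne c h2) (hSbdd c h1)
  have hFτ_le : ∀ c, 0 < c → c ≤ M → F (τ c) ≤ c := by
    intro c h1 h2
    by_contra h
    push_neg at h
    have hev : ∀ᶠ x in nhds (τ c), c < F x :=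
      (hFcont.tendsto (τ c)).eventually (eventually_gt_nhds h)
    obtain ⟨δ, hδ, hball⟩ := Metric.eventually_nhds_iff.mp hev
    have hx : τ c - δ/2 ∈ S c := by
      have : dist (τ c - δ/2) (τ c) < δ := by
        rw [Real.dist_eq]
        rw [abs_of_nonpos (by linarith)]
        linarith
      exact le_of_lt (hball this)
    have := csInf_le (hSbdd c h1) hx
    simp only [hτ] at this ⊢
    linarith
  refine ⟨τ, ?_, ?_⟩
  · -- τ c ∈ E
    intro c h1 h2
    by_contra hτE
    obtain ⟨δ, hδ, hball⟩ := Metric.isOpen_iff.mp hcl.isOpen_compl (τ c) hτE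
    have heq : E ∩ Iic (τ c - δ/2) = E ∩ Iic (τ c) := by
      apply Set.Subset.antisymm
      · exact Set.inter_subset_inter_right _ (Iic_subset_Iic.mpr (by linarith))
      · rintro x ⟨hxE, hxt⟩
        simp only [Set.mem_Iic] at hxt
        refine ⟨hxE, ?_⟩
        simp only [Set.mem_Iic]
        by_contra hgt
        push_neg at hgt
        have : x ∈ Metric.ball (τ c) δ := by
          rw [Metric.mem_ball, Real.dist_eq, abs_of_nonpos (by linarith)]
          linarith
        exact hball this hxE
      
    have hFeq : F (τ c - δ/2) = F (τ c) := by simp [hF, heq]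
    have hτS := hmemS c h1 h2
    simp only [hS, Set.mem_setOf_eq] at hτS
    have hx : τ c - δ/2 ∈ S c := by
      simp only [hS, Set.mem_setOf_eq, hFeq]
      exact hτS
    have := csInf_le (hSbdd c h1) hx
    simp only [hτ] at this
    linarith
  · -- gaps
    intro c c' h1 h12 h2
    have hτle : τ c ≤ τ c' := by
      apply csInf_le_csInf (hSbdd c h1) (hSne c' h2)
      intro t ht
      simp only [hS, Set.mem_setOf_eq] at ht ⊢
      linarith
    have hc'F : c' ≤ F (τ c') := hmemS c' (lt_of_lt_of_le h1 h12) h2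
    have hcF : F (τ c) ≤ c := hFτ_le c h1 (le_trans h12 h2)
    have := hFlip (τ c) (τ c') hτle
    linarith


open Set MeasureTheory Finset in
theorem statement16 (a b : ℝ) (hab : a < b) (q : ℕ) (hq : 1 ≤ q) (β : ℝ) (hβ : 0 < β)
    (f : ℝ → ℝ) (hf : ContDiffOn ℝ q f (Set.Icc a b))
    (hder : ∀ t ∈ Set.Icc a b, β < |iteratedDerivWithin q f (Set.Icc a b) t|) :
    ∀ ρ > (0:ℝ),
      MeasureTheory.volume {t | t ∈ Set.Icc a b ∧ |f t| ≤ ρ} ≤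
        ENNReal.ofReal (4 * ((q.factorial : ℝ) * ρ / (2 * β)) ^ (1 / (q : ℝ))) := by
  intro ρ hρ
  classical
  set X : ℝ := (q.factorial : ℝ) * ρ / (2 * β) with hX
  have hXpos : 0 < X := by
    have : (0:ℝ) < (q.factorial : ℝ) := by exact_mod_cast q.factorial_pos
    positivity
  set B : ℝ := 4 * X ^ (1 / (q : ℝ)) with hB
  have hBpos : 0 < B := by
    have := Real.rpow_pos_of_pos hXpos (1 / (q:ℝ))
    positivity
  set E : Set ℝ := {t | t ∈ Set.Icc a b ∧ |f t| ≤ ρ} with hE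
  have hEeq : E = Set.Icc a b ∩ f ⁻¹' (Set.Icc (-ρ) ρ) := by
    ext x
    simp [hE, abs_le, Set.mem_Icc, and_comm]
  have hcl : IsClosed E := by
    rw [hEeq]
    exact (hf.continuousOn.preimage_isClosed_of_isClosed isClosed_Icc isClosed_Icc)
  have hsub : E ⊆ Set.Icc a b := fun x hx => hx.1
  have hfin : volume E ≠ ⊤ := ((measure_mono hsub).trans_lt measure_Icc_lt_top).ne
  rw [← ENNReal.ofReal_toReal hfin]
  apply ENNReal.ofReal_le_ofReal
  set M : ℝ := (volume E).toReal with hM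
  by_contra hMB
  push_neg at hMB  -- B < M
  set M' : ℝ := (B + M)/2 with hM'
  have hM'pos : 0 < M' := by simp only [hM']; linarith
  have hM'M : M' < M := by simp only [hM']; linarith
  have hBM' : B < M' := by simp only [hM']; linarith
  obtain ⟨s, hsmono, hsmem, hssum⟩ := cheb_nodes q hq
  obtain ⟨τ, hτE, hτgap⟩ := quantile a b E hcl hsub
  set c : Fin (q+1) → ℝ := fun j => (M - M')/2 + s j * M' with hc
  have hc0 : ∀ j, 0 < c j := by
    intro j
    have h1 := (hsmem j).1
    have : 0 ≤ s j * M' := mul_nonneg h1 hM'pos.le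
    simp only [hc]
    linarith
  have hcM : ∀ j, c j ≤ M := by
    intro j
    have h2 := (hsmem j).2
    have : s j * M' ≤ M' := by nlinarith
    simp only [hc]
    linarith
  set t : Fin (q+1) → ℝ := fun j => τ (c j) with ht
  have htE : ∀ j, t j ∈ E := fun j => hτE (c j) (hc0 j) (hcM j)
  have hgap : ∀ i j : Fin (q+1), i ≤ j → M' * (s j - s i) ≤ t j - t i := by
    intro i j hij
    have hcij : c i ≤ c j := by
      simp only [hc]
      have := hsmono.monotone hij
      nlinarith
    have := hτgap (c i) (c j) (hc0 i) hcij (hcM j)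
    simp only [hc] at this
    simp only [ht]
    linarith
  have htmono : StrictMono t := by
    intro i j hij
    have h1 := hgap i j hij.le
    have h2 : 0 < s j - s i := sub_pos.mpr (hsmono hij)
    nlinarith
  have hmemt : ∀ j, t j ∈ Set.Icc a b := fun j => hsub (htE j)
  obtain ⟨ξ, hξ, heq⟩ := divdiff_mvt a b hab q f hf t htmono hmemt
  have hβξ := hder ξ hξ
  rw [heq] at hβξ
  -- bound the divided difference
  have hcard : ∀ j : Fin (q+1), (Finset.univ.erase j).card = q := by
    intro j
    rw [Finset.card_erase_of_mem (Finset.mem_univ j), Finset.card_univ, Fintype.card_fin]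
    omega
  have habs : ∀ (i j : Fin (q+1)), i ≠ j → M' * |s j - s i| ≤ |t j - t i| := by
    intro i j hij
    rcases lt_or_gt_of_ne hij with h | h
    · have h1 := hgap i j h.le
      have h2 : s i < s j := hsmono h
      have h3 : t i < t j := htmono h
      rw [abs_of_pos (sub_pos.mpr h2), abs_of_pos (sub_pos.mpr h3)]
      linarith
    · have h1 := hgap j i h.le
      have h2 : s j < s i := hsmono h
      have h3 : t j < t i := htmono h
      rw [abs_of_neg (sub_neg.mpr h2), abs_of_neg (sub_neg.mpr h3)]
      linarith
  have hsprodpos : ∀ j : Fin (q+1), 0 < ∏ i ∈ Finset.univ.erase j, |s j - s i| := by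
    intro j
    apply Finset.prod_pos
    intro i hi
    have hne : s j ≠ s i := fun h => Finset.ne_of_mem_erase hi (hsmono.injective h).symm
    exact abs_pos.mpr (sub_ne_zero.mpr hne)
  have hDbound : |∑ j, f (t j) * ∏ i ∈ Finset.univ.erase j, (t j - t i)⁻¹|
      ≤ ρ * (M'^q)⁻¹ * 2^(2*q-1) := by
    calc |∑ j, f (t j) * ∏ i ∈ Finset.univ.erase j, (t j - t i)⁻¹|
        ≤ ∑ j, |f (t j) * ∏ i ∈ Finset.univ.erase j, (t j - t i)⁻¹| :=
          Finset.abs_sum_le_sum_abs _ _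
      _ ≤ ∑ j, ρ * ((M'^q)⁻¹ * (∏ i ∈ Finset.univ.erase j, |s j - s i|)⁻¹) := by
          apply Finset.sum_le_sum
          intro j _
          rw [abs_mul, abs_prod]
          have hfb : |f (t j)| ≤ ρ := (htE j).2
          have hprodge : M'^q * ∏ i ∈ Finset.univ.erase j, |s j - s i|
              ≤ ∏ i ∈ Finset.univ.erase j, |t j - t i| := by
            have : ∏ i ∈ Finset.univ.erase j, (M' * |s j - s i|)
                ≤ ∏ i ∈ Finset.univ.erase j, |t j - t i| := by
              apply Finset.prod_le_prod
              · intro i _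
                positivity
              · intro i hi
                exact habs i j (Finset.ne_of_mem_erase hi)
            rwa [Finset.prod_mul_distrib, Finset.prod_const, hcard j] at this
          have hpos1 : 0 < M'^q * ∏ i ∈ Finset.univ.erase j, |s j - s i| := by
            have := hsprodpos j
            positivity
          have hinvle : (∏ i ∈ Finset.univ.erase j, |t j - t i|)⁻¹
              ≤ (M'^q * ∏ i ∈ Finset.univ.erase j, |s j - s i|)⁻¹ :=
            inv_anti₀ hpos1 hprodge
          have habsinv : ∏ i ∈ Finset.univ.erase j, |(t j - t i)⁻¹|
              = (∏ i ∈ Finset.univ.erase j, |t j - t i|)⁻¹ := by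
            rw [← Finset.prod_inv_distrib]
            exact Finset.prod_congr rfl (fun i _ => abs_inv _)
          calc |f (t j)| * ∏ i ∈ Finset.univ.erase j, |(t j - t i)⁻¹|
              ≤ ρ * (M'^q * ∏ i ∈ Finset.univ.erase j, |s j - s i|)⁻¹ := by
                rw [habsinv]
                apply mul_le_mul hfb hinvle (by positivity) hρ.le
            _ = ρ * ((M'^q)⁻¹ * (∏ i ∈ Finset.univ.erase j, |s j - s i|)⁻¹) := by
                rw [mul_inv]
      _ = ρ * (M'^q)⁻¹ * 2^(2*q-1) := by
          rw [← Finset.mul_sum, ← Finset.mul_sum, hssum]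
          ring
  -- derive numeric contradiction
  have hfactpos : (0:ℝ) < (q.factorial : ℝ) := by exact_mod_cast q.factorial_pos
  have habsfac : |(q.factorial : ℝ) * ∑ j, f (t j) * ∏ i ∈ Finset.univ.erase j, (t j - t i)⁻¹|
      = (q.factorial : ℝ) * |∑ j, f (t j) * ∏ i ∈ Finset.univ.erase j, (t j - t i)⁻¹| := by
    rw [abs_mul, abs_of_pos hfactpos]
  rw [habsfac] at hβξ
  have hkey : β < (q.factorial : ℝ) * (ρ * (M'^q)⁻¹ * 2^(2*q-1)) :=
    lt_of_lt_of_le hβξ (by nlinarith [hDbound, hfactpos])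
  have hM'q : M' ^ q * β < (q.factorial : ℝ) * ρ * 2^(2*q-1) := by
    have hMq : (0:ℝ) < M'^q := by positivity
    have := mul_lt_mul_of_pos_left hkey hMq
    calc M'^q * β < M'^q * ((q.factorial : ℝ) * (ρ * (M'^q)⁻¹ * 2^(2*q-1))) := this
      _ = (q.factorial : ℝ) * ρ * 2^(2*q-1) * (M'^q * (M'^q)⁻¹) := by ring
      _ = (q.factorial : ℝ) * ρ * 2^(2*q-1) := by
          rw [mul_inv_cancel₀ (ne_of_gt hMq), mul_one]
  have hBq : B ^ q = 4^q * X := by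
    rw [hB, mul_pow]
    congr 1
    rw [one_div, ← Real.rpow_natCast (X ^ ((q:ℝ))⁻¹) q, ← Real.rpow_mul hXpos.le]
    rw [inv_mul_cancel₀ (by exact_mod_cast (by omega : q ≠ 0) : (q:ℝ) ≠ 0)]
    exact Real.rpow_one X
  have h4q : (4:ℝ)^q = 2 * 2^(2*q-1) := by
    have : (4:ℝ)^q = 2^(2*q) := by
      rw [show (4:ℝ) = 2^2 by norm_num, ← pow_mul]
    rw [this, ← pow_succ' (2:ℝ) (2*q-1)]
    congr 1
    omega
  have hlt : M' ^ q < B ^ q := by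
    rw [hBq, h4q, hX]
    · calc M'^q = M'^q := rfl
      _ < (q.factorial : ℝ) * ρ * 2^(2*q-1) / β := by
          rw [lt_div_iff₀ hβ]; exact hM'q
      _ = 2 * 2^(2*q-1) * ((q.factorial : ℝ) * ρ / (2*β)) := by
          field_simp
  have : M' < B := lt_of_pow_lt_pow_left₀ q hBpos.le hlt
  linarith
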